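/- Orthologic is strictly weaker than classical logic: for distinct variables x and y, the sequent ((x ∧ (¬x ∨ y))^L, y^R) is not provable in the orthologic proof system without non-logical axioms, even though x ∧ (¬x ∨ y) → y is a classical propositional tautology. Equivalently, there exists an ortholattice L and elements a, b ∈ L with a ⊓ (aᶜ ⊔ b) ≰ b. -/

import Mathlib

/-- Propositional formulas over a set `X` of variables. -/
inductive Formula (X : Type) : Type
  | var : X → Formula X
  | bot : Formula X
  | top : Formula X
  | and : Formula X → Formula X → Formula X
  | or : Formula X → Formula X → Formula X
  | not : Formula X → Formula X

/-- An ortholattice: a bounded lattice with a complement operation. -/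
class Ortholattice (L : Type) extends Lattice L, BoundedOrder L where
  compl : L → L
  compl_compl : ∀ x : L, compl (compl x) = x
  compl_sup : ∀ x y : L, compl (x ⊔ y) = compl x ⊓ compl y
  compl_inf : ∀ x y : L, compl (x ⊓ y) = compl x ⊔ compl y
  inf_compl : ∀ x : L, x ⊓ compl x = ⊥
  sup_compl : ∀ x : L, x ⊔ compl x = ⊤

/-- Homomorphic extension of a valuation `v : X → L` to formulas. -/
def Formula.eval {X L : Type} [Ortholattice L] (v : X → L) : Formula X → L
  | .var x => v x
  | .bot => ⊥
  | .top => ⊤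
  | .and φ ψ => φ.eval v ⊓ ψ.eval v
  | .or φ ψ => φ.eval v ⊔ ψ.eval v
  | .not φ => Ortholattice.compl (φ.eval v)

/-- Annotated formulas: a formula marked as left (`L`) or right (`R`). -/
inductive Ann (X : Type) : Type
  | L : Formula X → Ann X
  | R : Formula X → Ann X

/-- The underlying formula of an annotated formula. -/
def Ann.fml {X : Type} : Ann X → Formula X
  | .L φ => φ
  | .R φ => φ

/-- An orthologic sequent: an unordered pair of annotated formulas. -/
abbrev Sequent (X : Type) := Sym2 (Ann X)

/-- The orthologic proof system, with non-logical axioms `A`. -/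
inductive OLProof {X : Type} (A : Set (Sequent X)) : Sequent X → Prop
  | ax {t : Sequent X} : t ∈ A → OLProof A t
  | hyp (φ : Formula X) : OLProof A s(Ann.L φ, Ann.R φ)
  | cut (Γ Δ : Ann X) (φ : Formula X) :
      OLProof A s(Γ, Ann.R φ) → OLProof A s(Ann.L φ, Δ) → OLProof A s(Γ, Δ)
  | replace (Γ Δ : Ann X) : OLProof A s(Γ, Γ) → OLProof A s(Γ, Δ)
  | andL₁ (φ ψ : Formula X) (Δ : Ann X) :
      OLProof A s(Ann.L φ, Δ) → OLProof A s(Ann.L (φ.and ψ), Δ)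
  | andL₂ (φ ψ : Formula X) (Δ : Ann X) :
      OLProof A s(Ann.L ψ, Δ) → OLProof A s(Ann.L (φ.and ψ), Δ)
  | andR (Γ : Ann X) (φ ψ : Formula X) :
      OLProof A s(Γ, Ann.R φ) → OLProof A s(Γ, Ann.R ψ) → OLProof A s(Γ, Ann.R (φ.and ψ))
  | orL (φ ψ : Formula X) (Δ : Ann X) :
      OLProof A s(Ann.L φ, Δ) → OLProof A s(Ann.L ψ, Δ) → OLProof A s(Ann.L (φ.or ψ), Δ)
  | orR₁ (Γ : Ann X) (φ ψ : Formula X) :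
      OLProof A s(Γ, Ann.R φ) → OLProof A s(Γ, Ann.R (φ.or ψ))
  | orR₂ (Γ : Ann X) (φ ψ : Formula X) :
      OLProof A s(Γ, Ann.R ψ) → OLProof A s(Γ, Ann.R (φ.or ψ))
  | negL (Γ : Ann X) (φ : Formula X) :
      OLProof A s(Γ, Ann.R φ) → OLProof A s(Γ, Ann.L φ.not)
  | negR (φ : Formula X) (Δ : Ann X) :
      OLProof A s(Ann.L φ, Δ) → OLProof A s(Ann.R φ.not, Δ)
  | botL (Δ : Ann X) : OLProof A s(Ann.L Formula.bot, Δ)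
  | topR (Γ : Ann X) : OLProof A s(Γ, Ann.R Formula.top)

/-- Satisfaction of an (ordered) pair of annotated formulas by a valuation. -/
def AnnSat {X L : Type} [Ortholattice L] (v : X → L) : Ann X → Ann X → Prop
  | .L φ, .R ψ => φ.eval v ≤ ψ.eval v
  | .R φ, .L ψ => ψ.eval v ≤ φ.eval v
  | .L φ, .L ψ => φ.eval v ⊓ ψ.eval v = ⊥
  | .R φ, .R ψ => φ.eval v ⊔ ψ.eval v = ⊤

/-- A valuation satisfies a sequent. -/
def SeqSat {X L : Type} [Ortholattice L] (v : X → L) (t : Sequent X) : Prop :=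
  ∀ a b : Ann X, t = s(a, b) → AnnSat v a b
/-- Boolean (classical) evaluation of a formula. -/
def Formula.evalB {X : Type} (v : X → Bool) : Formula X → Bool
  | .var x => v x
  | .bot => false
  | .top => true
  | .and φ ψ => φ.evalB v && ψ.evalB v
  | .or φ ψ => φ.evalB v || ψ.evalB v
  | .not φ => !(φ.evalB v)

/-- Size of a formula (number of nodes). -/
def Formula.size {X : Type} : Formula X → Nat
  | .var _ => 1
  | .bot => 1
  | .top => 1
  | .and φ ψ => φ.size + ψ.size + 1
  | .or φ ψ => φ.size + ψ.size + 1
  | .not φ => φ.size + 1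

/-- Negation normal form. -/
def Formula.nnf {X : Type} : Formula X → Formula X
  | .var x => .var x
  | .bot => .bot
  | .top => .top
  | .and φ ψ => .and φ.nnf ψ.nnf
  | .or φ ψ => .or φ.nnf ψ.nnf
  | .not (.var x) => .not (.var x)
  | .not .bot => .top
  | .not .top => .bot
  | .not (.and φ ψ) => .or φ.not.nnf ψ.not.nnf
  | .not (.or φ ψ) => .and φ.not.nnf ψ.not.nnf
  | .not (.not φ) => φ.nnf
termination_by φ => φ.size
decreasing_by all_goals (simp [Formula.size] <;> omega)

/-- A formula is in NNF if negation occurs only directly on variables. -/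
def Formula.IsNNF {X : Type} : Formula X → Prop
  | .var _ => True
  | .bot => True
  | .top => True
  | .and φ ψ => φ.IsNNF ∧ ψ.IsNNF
  | .or φ ψ => φ.IsNNF ∧ ψ.IsNNF
  | .not (.var _) => True
  | .not _ => False

/-- `getInverse φ = nnf (¬ φ)`. -/
def getInverse {X : Type} (φ : Formula X) : Formula X := φ.not.nnf

/-- Orthologic equivalence of formulas (without non-logical axioms). -/
def OLEquiv {X : Type} (φ ψ : Formula X) : Prop :=
  OLProof (∅ : Set (Sequent X)) s(Ann.L φ, Ann.R ψ) ∧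
  OLProof (∅ : Set (Sequent X)) s(Ann.L ψ, Ann.R φ)

/-- `Subformula γ φ` means `γ` is a subformula of `φ`. -/
inductive Subformula {X : Type} : Formula X → Formula X → Prop
  | refl (φ : Formula X) : Subformula φ φ
  | and_left {γ φ ψ : Formula X} : Subformula γ φ → Subformula γ (φ.and ψ)
  | and_right {γ φ ψ : Formula X} : Subformula γ ψ → Subformula γ (φ.and ψ)
  | or_left {γ φ ψ : Formula X} : Subformula γ φ → Subformula γ (φ.or ψ)
  | or_right {γ φ ψ : Formula X} : Subformula γ ψ → Subformula γ (φ.or ψ)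
  | not_sub {γ φ : Formula X} : Subformula γ φ → Subformula γ φ.not
namespace OLAux

variable {X L : Type} [Ortholattice L]

lemma compl_antitone {a b : L} (h : a ≤ b) : Ortholattice.compl b ≤ Ortholattice.compl a := by
  have hs : a ⊔ b = b := sup_eq_right.mpr h
  calc Ortholattice.compl b = Ortholattice.compl (a ⊔ b) := by rw [hs]
    _ = Ortholattice.compl a ⊓ Ortholattice.compl b := Ortholattice.compl_sup a b
    _ ≤ Ortholattice.compl a := inf_le_left

/-- Interpretation of an annotated formula. -/
def interp (v : X → L) : Ann X → L
  | .L φ => φ.eval v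
  | .R φ => Ortholattice.compl (φ.eval v)

lemma key_symm {v : X → L} {a b : Ann X} (h : interp v a ≤ Ortholattice.compl (interp v b)) :
    interp v b ≤ Ortholattice.compl (interp v a) := by
  have h2 := compl_antitone h
  rwa [Ortholattice.compl_compl] at h2

lemma of_pair {v : X → L} {c d : Ann X} (h : interp v c ≤ Ortholattice.compl (interp v d)) :
    ∀ a b : Ann X, (s(c, d) : Sequent X) = s(a, b) →
      interp v a ≤ Ortholattice.compl (interp v b) := by
  intro a b heq
  rw [Sym2.eq_iff] at heq
  rcases heq with ⟨rfl, rfl⟩ | ⟨rfl, rfl⟩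
  · exact h
  · exact key_symm h

lemma sound {v : X → L} {t : Sequent X} (h : OLProof (∅ : Set (Sequent X)) t) :
    ∀ a b : Ann X, t = s(a, b) → interp v a ≤ Ortholattice.compl (interp v b) := by
  induction h with
  | ax ht => exact absurd ht (Set.notMem_empty _)
  | hyp φ =>
      apply of_pair
      simp only [interp, Ortholattice.compl_compl]
      exact le_rfl
  | cut Γ Δ φ h1 h2 ih1 ih2 =>
      have k1 := ih1 Γ (Ann.R φ) rfl
      have k2 := ih2 (Ann.L φ) Δ rfl
      simp only [interp, Ortholattice.compl_compl] at k1 k2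
      exact of_pair (k1.trans k2)
  | replace Γ Δ h ih =>
      have k := ih Γ Γ rfl
      have hbot : interp v Γ = ⊥ := by
        refine le_antisymm ?_ bot_le
        calc interp v Γ ≤ interp v Γ ⊓ Ortholattice.compl (interp v Γ) := le_inf le_rfl k
          _ = ⊥ := Ortholattice.inf_compl _
      apply of_pair
      rw [hbot]
      exact bot_le
  | andL₁ φ ψ Δ h ih =>
      have k := ih (Ann.L φ) Δ rfl
      simp only [interp] at k
      apply of_pair
      simp only [interp, Formula.eval]
      exact le_trans inf_le_left k
  | andL₂ φ ψ Δ h ih =>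
      have k := ih (Ann.L ψ) Δ rfl
      simp only [interp] at k
      apply of_pair
      simp only [interp, Formula.eval]
      exact le_trans inf_le_right k
  | andR Γ φ ψ h1 h2 ih1 ih2 =>
      have k1 := ih1 Γ (Ann.R φ) rfl
      have k2 := ih2 Γ (Ann.R ψ) rfl
      simp only [interp, Ortholattice.compl_compl] at k1 k2
      apply of_pair
      simp only [interp, Formula.eval, Ortholattice.compl_compl]
      exact le_inf k1 k2
  | orL φ ψ Δ h1 h2 ih1 ih2 =>
      have k1 := ih1 (Ann.L φ) Δ rfl
      have k2 := ih2 (Ann.L ψ) Δ rfl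
      simp only [interp] at k1 k2
      apply of_pair
      simp only [interp, Formula.eval]
      exact sup_le k1 k2
  | orR₁ Γ φ ψ h ih =>
      have k := ih Γ (Ann.R φ) rfl
      simp only [interp, Ortholattice.compl_compl] at k
      apply of_pair
      simp only [interp, Formula.eval, Ortholattice.compl_compl]
      exact k.trans le_sup_left
  | orR₂ Γ φ ψ h ih =>
      have k := ih Γ (Ann.R ψ) rfl
      simp only [interp, Ortholattice.compl_compl] at k
      apply of_pair
      simp only [interp, Formula.eval, Ortholattice.compl_compl]
      exact k.trans le_sup_right
  | negL Γ φ h ih =>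
      have k := ih Γ (Ann.R φ) rfl
      simp only [interp, Ortholattice.compl_compl] at k
      apply of_pair
      simp only [interp, Formula.eval, Ortholattice.compl_compl]
      exact k
  | negR φ Δ h ih =>
      have k := ih (Ann.L φ) Δ rfl
      simp only [interp] at k
      apply of_pair
      simp only [interp, Formula.eval, Ortholattice.compl_compl]
      exact k
  | botL Δ =>
      apply of_pair
      simp only [interp, Formula.eval]
      exact bot_le
  | topR Γ =>
      apply of_pair
      simp only [interp, Formula.eval, Ortholattice.compl_compl]
      exact le_top

end OLAux

/-- The benzene ring ortholattice O6. -/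
inductive O6 : Type
  | z | p | q | p' | q' | o
deriving DecidableEq

instance : Fintype O6 :=
  ⟨{O6.z, O6.p, O6.q, O6.p', O6.q', O6.o}, fun x => by cases x <;> decide⟩

/-- Order on O6: `z < p < q' < o` and `z < q < p' < o`. -/
def O6.leB : O6 → O6 → Bool
  | .z, _ => true
  | _, .o => true
  | .p, .p => true
  | .p, .q' => true
  | .q, .q => true
  | .q, .p' => true
  | .p', .p' => true
  | .q', .q' => true
  | _, _ => false

instance : LE O6 := ⟨fun a b => O6.leB a b = true⟩

instance : DecidableRel ((· ≤ ·) : O6 → O6 → Prop) := fun a b => inferInstanceAs (Decidable (_ = true))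

instance : Lattice O6 where
  le := (· ≤ ·)
  le_refl := by decide
  le_trans := by decide
  le_antisymm := by decide
  sup a b := if O6.leB a b then b else if O6.leB b a then a else O6.o
  le_sup_left := by decide
  le_sup_right := by decide
  sup_le := by decide
  inf a b := if O6.leB a b then a else if O6.leB b a then b else O6.z
  inf_le_left := by decide
  inf_le_right := by decide
  le_inf := by decide

instance : BoundedOrder O6 where
  top := O6.o
  le_top := by decide
  bot := O6.z
  bot_le := by decide

/-- Orthocomplement on O6. -/
def O6.compl : O6 → O6
  | .z => .o
  | .o => .z
  | .p => .p'
  | .p' => .p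
  | .q => .q'
  | .q' => .q

instance instOrthoO6 : Ortholattice O6 where
  compl := O6.compl
  compl_compl := by decide
  compl_sup := by decide
  compl_inf := by decide
  inf_compl := by decide
  sup_compl := by decide

/-- Orthologic is strictly weaker than classical logic: for
distinct variables `x ≠ y`, the sequent `((x ∧ (¬x ∨ y))^L, y^R)` is not
provable, although `x ∧ (¬x ∨ y) → y` is a classical tautology; equivalently,
there is an ortholattice with elements `a`, `b` such that `a ⊓ (aᶜ ⊔ b) ≰ b`. -/
theorem ol_strictly_weaker {X : Type} [Countable X] [Infinite X]
    (x y : X) (hxy : x ≠ y) :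
    ¬ OLProof (∅ : Set (Sequent X))
        s(Ann.L ((Formula.var x).and ((Formula.var x).not.or (Formula.var y))),
          Ann.R (Formula.var y)) ∧
    (∀ v : X → Bool,
      Formula.evalB v ((Formula.var x).and ((Formula.var x).not.or (Formula.var y))) = true →
      Formula.evalB v (Formula.var y) = true) ∧
    (∃ (L : Type) (inst : Ortholattice L) (a b : L),
      letI : Ortholattice L := inst
      ¬ (a ⊓ (Ortholattice.compl a ⊔ b) ≤ b)) := by
  refine ⟨?_, ?_, O6, instOrthoO6, O6.p', O6.q, by decide⟩
  · intro hpf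
    haveI := Classical.decEq X
    have key := OLAux.sound (v := fun t => if t = x then O6.p' else O6.q) hpf _ _ rfl
    simp only [OLAux.interp, Formula.eval, if_pos rfl,
      if_neg (Ne.symm hxy), Ortholattice.compl_compl] at key
    exact absurd key (by decide)
  · intro v h
    cases hx : v x <;> cases hy : v y <;> simp_all [Formula.evalB]
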